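/- Let S be a finite set of points with distinct x-coordinates and let v_c be a node of a range tree on y-coordinates that is the lowest common ancestor of the leaves for c and d, with left child v_l and right child v_r. Then S ∩ ([a,b]×[c,d]) = (S(v_l) ∩ ([a,b]×[c,∞))) ∪ (S(v_r) ∩ ([a,b]×(−∞,d])), and the union is disjoint. -/
import Mathlib


/-- **Splitting a range query at the LCA of a range tree on `y`-coordinates.**
`Sl` and `Sr` are the point sets of the left and right children of the lowest
common ancestor `v_c` of the leaves for `c` and `d`: they are subsets of `S`,
every point of `S` with `y ∈ [c,d]` lies in `Sl ∪ Sr`, all `y`-coordinates of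
`Sl` precede those of `Sr`, the predecessor leaf of `d` is below the right
child (some point of `Sr` has `y ≤ d`) and the successor leaf of `c` is below
the left child (some point of `Sl` has `y ≥ c`).  Then
`S ∩ ([a,b] × [c,d]) = (Sl ∩ ([a,b] × [c,∞))) ∪ (Sr ∩ ([a,b] × (−∞,d]))`,
and the union is disjoint. -/
theorem stmt12 (S Sl Sr : Set (ℝ × ℝ)) (a b c d : ℝ)
    (hl : Sl ⊆ S) (hr : Sr ⊆ S)
    (hcover : ∀ p ∈ S, c ≤ p.2 → p.2 ≤ d → p ∈ Sl ∪ Sr)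
    (horder : ∀ p ∈ Sl, ∀ q ∈ Sr, p.2 < q.2)
    (hpredd : ∃ q ∈ Sr, q.2 ≤ d)
    (hsuccc : ∃ p ∈ Sl, c ≤ p.2) :
    {p ∈ S | a ≤ p.1 ∧ p.1 ≤ b ∧ c ≤ p.2 ∧ p.2 ≤ d} =
      {p ∈ Sl | a ≤ p.1 ∧ p.1 ≤ b ∧ c ≤ p.2} ∪
        {p ∈ Sr | a ≤ p.1 ∧ p.1 ≤ b ∧ p.2 ≤ d} ∧
    Disjoint {p ∈ Sl | a ≤ p.1 ∧ p.1 ≤ b ∧ c ≤ p.2}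
      {p ∈ Sr | a ≤ p.1 ∧ p.1 ≤ b ∧ p.2 ≤ d} := by
  obtain ⟨q0, hq0, hq0d⟩ := hpredd
  obtain ⟨p0, hp0, hcp0⟩ := hsuccc
  constructor
  · ext p
    simp only [Set.mem_setOf_eq, Set.mem_union]
    constructor
    · rintro ⟨hpS, ha, hb, hc, hd⟩
      rcases hcover p hpS hc hd with h | h
      · exact Or.inl ⟨h, ha, hb, hc⟩
      · exact Or.inr ⟨h, ha, hb, hd⟩
    · rintro (⟨h, ha, hb, hc⟩ | ⟨h, ha, hb, hd⟩)
      · exact ⟨hl h, ha, hb, hc, le_of_lt (lt_of_lt_of_le (horder p h q0 hq0) hq0d)⟩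
      · exact ⟨hr h, ha, hb, le_trans hcp0 (le_of_lt (horder p0 hp0 p h)), hd⟩
  · rw [Set.disjoint_left]
    rintro p ⟨h1, -⟩ ⟨h2, -⟩
    exact lt_irrefl p.2 (horder p h1 p h2)
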